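/- For all u in the periodic Sobolev space H²_per([0,1],ℂ) and every integer n > 1, the inequality ‖u'‖₂ ≤ (1/(n−1))‖u''‖₂ + (2n(n+1)/(n−1))‖u‖₂ holds, where ‖·‖₂ is the L²([0,1]) norm. -/

import Mathlib

open intervalIntegral

private lemma star_mul_self_re (z : ℂ) : (star z * z).re = ‖z‖^2 := by
  simp [Complex.star_def, Complex.mul_re, Complex.sq_norm,
    Complex.normSq_apply]

/-- Kato's inequality (1.12): for every 1-periodic `u` of class `C²`
(`u ∈ H²_per([0,1],ℂ)`) and every integer `n > 1`,
`‖u'‖₂ ≤ (1/(n−1))‖u''‖₂ + (2n(n+1)/(n−1))‖u‖₂` in the `L²([0,1])` norm. -/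
theorem stmt_15 (u : ℝ → ℂ) (hper : Function.Periodic u 1)
    (hu : ContDiff ℝ 2 u) (n : ℕ) (hn : 1 < n) :
    Real.sqrt (∫ x in (0:ℝ)..1, ‖deriv u x‖ ^ 2)
      ≤ (1 / ((n : ℝ) - 1)) *
          Real.sqrt (∫ x in (0:ℝ)..1, ‖deriv (deriv u) x‖ ^ 2)
        + (2 * (n : ℝ) * ((n : ℝ) + 1) / ((n : ℝ) - 1)) *
          Real.sqrt (∫ x in (0:ℝ)..1, ‖u x‖ ^ 2) := by
  have h2 : ContDiff ℝ ((1:ℕ∞) + 1) u := by exact_mod_cast hu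
  obtain ⟨hud, -, hv⟩ := contDiff_succ_iff_deriv.mp h2
  obtain ⟨hvd, -, hw0⟩ := contDiff_succ_iff_deriv.mp
    (show ContDiff ℝ ((0:ℕ∞)+1) (deriv u) from by exact_mod_cast hv)
  have hcu : Continuous u := hu.continuous
  have hcv : Continuous (deriv u) := hv.continuous
  have hcw : Continuous (deriv (deriv u)) := hw0.continuous
  -- periodicity of deriv u
  have hvper : deriv u 1 = deriv u 0 := by
    have : deriv (fun y => u (y + 1)) 0 = deriv u (0 + 1) := deriv_comp_add_const u 1 0
    have heq : (fun y => u (y + 1)) = u := funext fun y => hper y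
    rw [heq] at this
    simpa using this.symm
  have huper : u 1 = u 0 := by simpa using hper 0
  -- derivative of φ x = (star (u x) * deriv u x).re
  have key : ∀ x ∈ Set.uIcc (0:ℝ) 1, HasDerivAt (fun y => (star (u y) * deriv u y).re)
      (‖deriv u x‖^2 + (star (u x) * deriv (deriv u) x).re) x := by
    intro x _
    have hux : HasDerivAt u (deriv u x) x := (hud x).hasDerivAt
    have hvx : HasDerivAt (deriv u) (deriv (deriv u) x) x := (hvd x).hasDerivAt
    have hmul : HasDerivAt (fun y => star (u y) * deriv u y)
        (star (deriv u x) * deriv u x + star (u x) * deriv (deriv u) x) x :=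
      hux.star.mul hvx
    have h4 := Complex.reCLM.hasFDerivAt.comp_hasDerivAt x hmul
    have he : Complex.reCLM (star (deriv u x) * deriv u x + star (u x) * deriv (deriv u) x)
        = ‖deriv u x‖^2 + (star (u x) * deriv (deriv u) x).re := by
      rw [Complex.reCLM_apply, Complex.add_re, star_mul_self_re]
    exact he ▸ h4
  have hintd : ∫ x in (0:ℝ)..1,
      (‖deriv u x‖^2 + (star (u x) * deriv (deriv u) x).re)
      = (star (u 1) * deriv u 1).re - (star (u 0) * deriv u 0).re := by
    apply integral_eq_sub_of_hasDerivAt key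
    exact (((hcv.norm.pow 2).add
      ((Complex.continuous_re.comp ((continuous_star.comp hcu).mul hcw)))).intervalIntegrable 0 1)
  rw [huper, hvper, sub_self] at hintd
  -- integrability facts
  have int1 : IntervalIntegrable (fun x => ‖deriv u x‖^2) MeasureTheory.volume 0 1 :=
    (hcv.norm.pow 2).intervalIntegrable 0 1
  have int2 : IntervalIntegrable (fun x => (star (u x) * deriv (deriv u) x).re)
      MeasureTheory.volume 0 1 :=
    (Complex.continuous_re.comp ((continuous_star.comp hcu).mul hcw)).intervalIntegrable 0 1
  have intw : IntervalIntegrable (fun x => ‖deriv (deriv u) x‖^2) MeasureTheory.volume 0 1 :=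
    (hcw.norm.pow 2).intervalIntegrable 0 1
  have intu : IntervalIntegrable (fun x => ‖u x‖^2) MeasureTheory.volume 0 1 :=
    (hcu.norm.pow 2).intervalIntegrable 0 1
  rw [integral_add int1 int2] at hintd
  have hsplit : (∫ x in (0:ℝ)..1, ‖deriv u x‖^2)
      = -∫ x in (0:ℝ)..1, (star (u x) * deriv (deriv u) x).re := by linarith
  -- constants
  have hn1 : (1:ℝ) < (n:ℝ) := by exact_mod_cast hn
  have hpos : (0:ℝ) < (n:ℝ) - 1 := by linarith
  set a : ℝ := 1 / ((n:ℝ) - 1) with ha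
  set c : ℝ := ((n:ℝ) - 1) / 2 with hc
  have hapos : 0 < a := by positivity
  have hcpos : 0 < c := by positivity
  -- pointwise bound
  have hpt : ∀ x ∈ Set.uIcc (0:ℝ) 1,
      -(star (u x) * deriv (deriv u) x).re ≤ a^2 * ‖deriv (deriv u) x‖^2 + c^2 * ‖u x‖^2 := by
    intro x _
    have h1 : |(star (u x) * deriv (deriv u) x).re| ≤ ‖star (u x) * deriv (deriv u) x‖ :=
      Complex.abs_re_le_norm _
    have h2 : ‖star (u x) * deriv (deriv u) x‖ = ‖u x‖ * ‖deriv (deriv u) x‖ := by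
      rw [norm_mul, norm_star]
    have h3 : -(star (u x) * deriv (deriv u) x).re ≤ ‖u x‖ * ‖deriv (deriv u) x‖ := by
      rw [← h2]; exact (neg_le_abs _).trans h1
    have hac : 2 * a * c = 1 := by rw [ha, hc]; field_simp
    have h4 : -(star (u x) * deriv (deriv u) x).re
        ≤ 2 * a * c * (‖u x‖ * ‖deriv (deriv u) x‖) := by rw [hac]; linarith
    nlinarith [sq_nonneg (a * ‖deriv (deriv u) x‖ - c * ‖u x‖), h4]
  have hbound : (∫ x in (0:ℝ)..1, ‖deriv u x‖^2)
      ≤ a^2 * (∫ x in (0:ℝ)..1, ‖deriv (deriv u) x‖^2) + c^2 * (∫ x in (0:ℝ)..1, ‖u x‖^2) := by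
    rw [hsplit, ← integral_neg]
    calc (∫ x in (0:ℝ)..1, -(star (u x) * deriv (deriv u) x).re)
        ≤ ∫ x in (0:ℝ)..1, (a^2 * ‖deriv (deriv u) x‖^2 + c^2 * ‖u x‖^2) := by
          apply integral_mono_on (by norm_num) int2.neg
            ((intw.const_mul _).add (intu.const_mul _))
          intro x hx
          exact hpt x (Set.mem_uIcc_of_le hx.1 hx.2)
      _ = a^2 * (∫ x in (0:ℝ)..1, ‖deriv (deriv u) x‖^2) + c^2 * (∫ x in (0:ℝ)..1, ‖u x‖^2) := by
          rw [integral_add (intw.const_mul _) (intu.const_mul _), integral_const_mul,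
            integral_const_mul]
  -- nonnegativity of integrals
  have nnv : 0 ≤ ∫ x in (0:ℝ)..1, ‖deriv u x‖^2 :=
    integral_nonneg (by norm_num) (fun x _ => by positivity)
  have nnw : 0 ≤ ∫ x in (0:ℝ)..1, ‖deriv (deriv u) x‖^2 :=
    integral_nonneg (by norm_num) (fun x _ => by positivity)
  have nnu : 0 ≤ ∫ x in (0:ℝ)..1, ‖u x‖^2 :=
    integral_nonneg (by norm_num) (fun x _ => by positivity)
  set A := Real.sqrt (∫ x in (0:ℝ)..1, ‖deriv (deriv u) x‖^2) with hA
  set B := Real.sqrt (∫ x in (0:ℝ)..1, ‖u x‖^2) with hB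
  have hA2 : A^2 = ∫ x in (0:ℝ)..1, ‖deriv (deriv u) x‖^2 := Real.sq_sqrt nnw
  have hB2 : B^2 = ∫ x in (0:ℝ)..1, ‖u x‖^2 := Real.sq_sqrt nnu
  have hAnn : 0 ≤ A := Real.sqrt_nonneg _
  have hBnn : 0 ≤ B := Real.sqrt_nonneg _
  have step1 : Real.sqrt (∫ x in (0:ℝ)..1, ‖deriv u x‖^2) ≤ a * A + c * B := by
    have h1 : (∫ x in (0:ℝ)..1, ‖deriv u x‖^2) ≤ (a * A + c * B)^2 := by
      nlinarith [hbound, mul_nonneg (mul_nonneg hapos.le hAnn) (mul_nonneg hcpos.le hBnn)]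
    calc Real.sqrt (∫ x in (0:ℝ)..1, ‖deriv u x‖^2) ≤ Real.sqrt ((a * A + c * B)^2) :=
          Real.sqrt_le_sqrt h1
      _ = a * A + c * B := Real.sqrt_sq (by positivity)
  refine step1.trans ?_
  have hcle : c ≤ 2 * (n:ℝ) * ((n:ℝ) + 1) / ((n:ℝ) - 1) := by
    rw [hc, div_le_div_iff₀ (by norm_num) hpos]
    nlinarith
  have : c * B ≤ (2 * (n:ℝ) * ((n:ℝ) + 1) / ((n:ℝ) - 1)) * B :=
    mul_le_mul_of_nonneg_right hcle hBnn
  linarith
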